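/- Let G be a graph model with web G = (G, i), and suppose α ∈ ⟦M⟧^G \ ⟦N⟧^G for closed λ-terms M, N. Then there exists a finite subpair A ⊑ G with α ∈ A such that for all partial pairs B satisfying A ⊑ B ⊑ G: (i) α ∈ ⟦M⟧^B \ ⟦N⟧^B, and (ii) α ∈ ⟦M⟧^{G_B̄} \ ⟦N⟧^{G_B̄}, where G_B̄ is the graph model generated by the free completion B̄ of B. -/

import Mathlib

universe u v

/-- Untyped λ-terms in de Bruijn notation (over the countably infinite
supply of variables `ℕ`). -/
inductive Term : Type
  | var : ℕ → Term
  | app : Term → Term → Term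
  | lam : Term → Term
  deriving DecidableEq

namespace Term

/-- Shift the free variables `≥ d` up by one. -/
def lift (d : ℕ) : Term → Term
  | var n => if n < d then var n else var (n + 1)
  | app M N => app (lift d M) (lift d N)
  | lam M => lam (lift (d + 1) M)

/-- Capture-avoiding substitution of `N` for the free variable `k`. -/
def subst : Term → ℕ → Term → Term
  | var n, k, N => if n = k then N else if k < n then var (n - 1) else var n
  | app P Q, k, N => app (subst P k N) (subst Q k N)
  | lam P, k, N => lam (subst P (k + 1) (lift 0 N))

/-- One-step β-reduction. -/
inductive Step : Term → Term → Prop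
  | beta (M N : Term) : Step (app (lam M) N) (subst M 0 N)
  | appL {M M' : Term} (N : Term) : Step M M' → Step (app M N) (app M' N)
  | appR (M : Term) {N N' : Term} : Step N N' → Step (app M N) (app M N')
  | abs {M M' : Term} : Step M M' → Step (lam M) (lam M')

/-- β-conversion: the least equivalence relation containing one-step β-reduction. -/
inductive BetaConv : Term → Term → Prop
  | of {M N : Term} : Step M N → BetaConv M N
  | refl (M : Term) : BetaConv M M
  | symm {M N : Term} : BetaConv M N → BetaConv N M
  | trans {M N P : Term} : BetaConv M N → BetaConv N P → BetaConv M P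

/-- All free variables are `< d`. -/
def BoundedBy : Term → ℕ → Prop
  | var n, d => n < d
  | app M N, d => BoundedBy M d ∧ BoundedBy N d
  | lam M, d => BoundedBy M (d + 1)

/-- Closed λ-terms. -/
def Closed (M : Term) : Prop := BoundedBy M 0

/-- Terms of the form `y M₁ ⋯ Mₖ` (a variable applied to arguments). -/
inductive IsVarApp : Term → Prop
  | var (n : ℕ) : IsVarApp (var n)
  | app {M : Term} (N : Term) : IsVarApp M → IsVarApp (app M N)

/-- Head normal forms `λx₁…xₙ. y M₁ ⋯ Mₖ`. -/
inductive IsHnf : Term → Prop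
  | head {M : Term} : IsVarApp M → IsHnf M
  | abs {M : Term} : IsHnf M → IsHnf (lam M)

/-- A λ-term is solvable if it is β-convertible to a head normal form. -/
def Solvable (M : Term) : Prop := ∃ N, BetaConv M N ∧ IsHnf N

/-- Unsolvable λ-terms. -/
def Unsolvable (M : Term) : Prop := ¬ Solvable M

/-- β-normal forms: terms containing no β-redex. -/
def IsNormal : Term → Prop
  | var _ => True
  | lam M => IsNormal M
  | app M N => (∀ P, M ≠ lam P) ∧ IsNormal M ∧ IsNormal N

/-- A fixed effective bijective Gödel numbering of λ-terms. -/
def code : Term → ℕ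
  | var n => 3 * n
  | app M N => 3 * Nat.pair (code M) (code N) + 1
  | lam M => 3 * code M + 2

/-- `δ = λx.xx`. -/
def delta : Term := lam (app (var 0) (var 0))

/-- `Ω = (λx.xx)(λx.xx)`. -/
def Omega : Term := app delta delta

/-- `I = λx.x`. -/
def Idt : Term := lam (var 0)

end Term

open Term

/-- A set of λ-terms is r.e. if its set of Gödel codes is r.e. -/
def TermSetRe (V : Set Term) : Prop := REPred fun n : ℕ => ∃ M ∈ V, code M = n

/-- A set of λ-terms is co-r.e. if its set of Gödel codes is co-r.e.; since the
numbering is bijective this means that the code set of the complement is r.e. -/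
def TermSetCoRe (V : Set Term) : Prop := TermSetRe Vᶜ

/-- β-co-r.e. sets: co-r.e. sets of λ-terms closed under β-conversion. -/
def BetaCoRe (V : Set Term) : Prop :=
  (∀ M N, M ∈ V → BetaConv M N → N ∈ V) ∧ TermSetCoRe V

/-- A set of pairs of λ-terms is r.e. if the corresponding set of codes of
pairs is r.e. -/
def PairsRe (T : Set (Term × Term)) : Prop :=
  REPred fun n : ℕ => ∃ p ∈ T, Nat.pair (code p.1) (code p.2) = n

/-- λ-theories: congruences on Λ containing β-conversion. -/
def IsLambdaTheory (T : Term → Term → Prop) : Prop :=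
  Equivalence T ∧
  (∀ M M' N N', T M M' → T N N' → T (Term.app M N) (Term.app M' N')) ∧
  (∀ M M', T M M' → T (Term.lam M) (Term.lam M')) ∧
  (∀ M N, BetaConv M N → T M N)

/-- Partial pairs (as raw data): a carrier set together with a partial map `j`,
given as an `Option`-valued map on pairs of a subset and an element. -/
structure PrePair (α : Type u) : Type u where
  carrier : Set α
  j : Set α × α → Option α

namespace PrePair

variable {α : Type u}

/-- The defining conditions of a partial pair: the carrier is non-empty and `j`
is a partial injection `A* × A ⇀ A`. -/
def Valid (P : PrePair α) : Prop :=
  P.carrier.Nonempty ∧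
  (∀ a x y, P.j (a, x) = some y →
      a.Finite ∧ a ⊆ P.carrier ∧ x ∈ P.carrier ∧ y ∈ P.carrier) ∧
  (∀ p q y, P.j p = some y → P.j q = some y → p = q)

/-- Total pairs: `j` is defined on every pair of a finite subset of the
carrier and an element of the carrier. -/
def Total (P : PrePair α) : Prop :=
  ∀ a x, a.Finite → a ⊆ P.carrier → x ∈ P.carrier → ∃ y, P.j (a, x) = some y

/-- Webs of graph models: total pairs with infinite carrier. -/
def IsGraphModel (P : PrePair α) : Prop := P.Valid ∧ P.Total ∧ P.carrier.Infinite

/-- The subpair relation `A ⊑ B`. -/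
def Subpair (P Q : PrePair α) : Prop :=
  P.carrier ⊆ Q.carrier ∧ ∀ p y, P.j p = some y → Q.j p = some y

end PrePair

/-- Consing a value onto an environment (de Bruijn style). -/
def envCons {α : Type u} (s : Set α) (ρ : ℕ → Set α) : ℕ → Set α
  | 0 => s
  | n + 1 => ρ n

/-- The interpretation of a λ-term with respect to a partial pair and an
environment. -/
def interp {α : Type u} (P : PrePair α) : Term → (ℕ → Set α) → Set α
  | Term.var n, ρ => ρ n
  | Term.app M N, ρ =>
      {y | ∃ a : Set α, a.Finite ∧ a ⊆ interp P N ρ ∧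
        ∃ z, P.j (a, y) = some z ∧ z ∈ interp P M ρ}
  | Term.lam M, ρ =>
      {y | ∃ (a : Set α) (x : α), a.Finite ∧ P.j (a, x) = some y ∧
        x ∈ interp P M (envCons a ρ)}

/-- The interpretation of a closed λ-term. -/
def interpC {α : Type u} (P : PrePair α) (M : Term) : Set α :=
  interp P M fun _ => (∅ : Set α)

/-- The order theory of (the graph model generated by) a pair. -/
def ThLe {α : Type u} (P : PrePair α) : Set (Term × Term) :=
  {p | ∀ ρ : ℕ → Set α, (∀ n, ρ n ⊆ P.carrier) → interp P p.1 ρ ⊆ interp P p.2 ρ}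

/-- The equational theory of (the graph model generated by) a pair. -/
def Th {α : Type u} (P : PrePair α) : Set (Term × Term) :=
  {p | ∀ ρ : ℕ → Set α, (∀ n, ρ n ⊆ P.carrier) → interp P p.1 ρ = interp P p.2 ρ}

/-- Morphisms of partial pairs. -/
def IsMorphism {α : Type u} {β : Type v} (P : PrePair α) (Q : PrePair β)
    (f : α → β) : Prop :=
  Set.MapsTo f P.carrier Q.carrier ∧
  ∀ a x y, a ⊆ P.carrier → x ∈ P.carrier → P.j (a, x) = some y →
    Q.j (f '' a, f x) = some (f y)

/-- Isomorphisms of partial pairs: morphisms which are bijections between the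
carriers and whose inverse is also a morphism. -/
def IsIso {α : Type u} {β : Type v} (P : PrePair α) (Q : PrePair β)
    (f : α → β) : Prop :=
  IsMorphism P Q f ∧
  ∃ g : β → α, IsMorphism Q P g ∧
    (∀ x ∈ P.carrier, g (f x) = x) ∧ ∀ y ∈ Q.carrier, f (g y) = y

/-- The ambient type of the free completion: formal copies `base x` of the
original elements together with formal pairs `node`. -/
inductive FC (α : Type u) : Type u
  | base : α → FC α
  | node : List (FC α) → FC α → FC α

namespace FC

variable {α : Type u}

open scoped Classical

/-- A canonical list enumerating a finite set. -/
noncomputable def listOf (s : Set (FC α)) : List (FC α) :=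
  if h : s.Finite then h.toFinset.toList else []

/-- The copy of the original carrier inside `FC α`. -/
def baseSet (P : PrePair α) : Set (FC α) := base '' P.carrier

/-- `(a, x)` is the copy of a pair in the domain of `j`. -/
def IsOldDom (P : PrePair α) (a : Set (FC α)) (x : FC α) : Prop :=
  ∃ (a₀ : Set α) (x₀ : α), a = base '' a₀ ∧ x = base x₀ ∧ (P.j (a₀, x₀)).isSome

/-- The increasing stages `Aₙ` of the free completion:
`A₀ = A` and `A_{n+1} = A ∪ ((Aₙ* × Aₙ) ∖ dom j)`. -/
def stage (P : PrePair α) : ℕ → Set (FC α)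
  | 0 => baseSet P
  | n + 1 => baseSet P ∪
      {t | ∃ (a : Set (FC α)) (x : FC α), a.Finite ∧ a ⊆ stage P n ∧
        x ∈ stage P n ∧ ¬ IsOldDom P a x ∧ t = node (listOf a) x}

/-- The carrier `Ā = ⋃ₙ Aₙ` of the free completion. -/
def compCarrier (P : PrePair α) : Set (FC α) := ⋃ n, stage P n

/-- `y` is the copy of the old value `j (a₀, x₀)`, where `(a, x)` is the copy
of `(a₀, x₀) ∈ dom j`. -/
def OldVal (P : PrePair α) (a : Set (FC α)) (x y : FC α) : Prop :=
  ∃ (a₀ : Set α) (x₀ y₀ : α), a = base '' a₀ ∧ x = base x₀ ∧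
    P.j (a₀, x₀) = some y₀ ∧ y = base y₀

/-- The total injection `j̄` of the free completion: it extends `j` and sends
every other pair `(a, α)` of the completion to (the formal copy of) itself. -/
noncomputable def jbar (P : PrePair α) (p : Set (FC α) × FC α) : Option (FC α) :=
  if p.1.Finite ∧ p.1 ⊆ compCarrier P ∧ p.2 ∈ compCarrier P then
    if h : ∃ y, OldVal P p.1 p.2 y then some h.choose
    else some (node (listOf p.1) p.2)
  else none

end FC

/-- The free completion `Ā` of a partial pair `A`, as a total pair on `FC α`. -/
noncomputable def completion {α : Type u} (P : PrePair α) : PrePair (FC α) :=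
  ⟨FC.compCarrier P, FC.jbar P⟩

/-- The fixed effective encoding of finite subsets of `ℕ`. -/
def encF (s : Finset ℕ) : ℕ := s.sum fun i => 2 ^ i

/-- A partial pair on `ℕ` whose carrier is a decidable set and whose map `j` is
partial recursive with decidable domain (under the fixed effective encoding of
finite sets and pairs). -/
def ConcreteWE (Q : PrePair ℕ) : Prop :=
  ComputablePred (· ∈ Q.carrier) ∧
  ∃ f : ℕ →. ℕ, Nat.Partrec f ∧ ComputablePred (fun n => (f n).Dom) ∧
    ∀ (a : Finset ℕ) (x y : ℕ), Q.j (↑a, x) = some y ↔ y ∈ f (Nat.pair (encF a) x)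

/-- The range of `j` is decidable. -/
def ConcreteRange (Q : PrePair ℕ) : Prop :=
  ComputablePred fun y => ∃ p, Q.j p = some y

/-- Weakly effective partial pairs: partial pairs isomorphic to a partial pair
on `ℕ` with decidable carrier whose `j` is partial recursive with decidable
domain. -/
def WeaklyEffective {α : Type u} (P : PrePair α) : Prop :=
  ∃ Q : PrePair ℕ, ConcreteWE Q ∧ ∃ f : α → ℕ, IsIso P Q f

/-- Effective partial pairs: weakly effective via a pair whose `j` moreover has
decidable range. -/
def EffectivePair {α : Type u} (P : PrePair α) : Prop :=
  ∃ Q : PrePair ℕ, ConcreteWE Q ∧ ConcreteRange Q ∧ ∃ f : α → ℕ, IsIso P Q f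

/-- Effective total pairs: total pairs isomorphic to some `(ℕ, ℓ)` with `ℓ`
total recursive, injective and with decidable range. -/
def EffectiveTotalPair {α : Type u} (P : PrePair α) : Prop :=
  ∃ Q : PrePair ℕ, Q.carrier = Set.univ ∧
    (∃ f : ℕ → ℕ, Computable f ∧ Function.Injective f ∧
      ComputablePred (fun y => ∃ n, f n = y) ∧
      ∀ (a : Finset ℕ) (x : ℕ), Q.j (↑a, x) = some (f (Nat.pair (encF a) x))) ∧
    ∃ h : α → ℕ, IsIso P Q h

section Aux

open scoped Classical

variable {α : Type u} {β : Type v}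

/-- Interpretation is monotone along maps preserving `j`. -/
theorem interp_mono_map (P : PrePair α) (Q : PrePair β) (f : α → β)
    (hf : ∀ a x y, P.j (a, x) = some y → Q.j (f '' a, f x) = some (f y)) :
    ∀ (M : Term) (ρ : ℕ → Set α) (ρ' : ℕ → Set β),
      (∀ n, f '' ρ n ⊆ ρ' n) → f '' interp P M ρ ⊆ interp Q M ρ' := by
  intro M
  induction M with
  | var n => intro ρ ρ' hρ; exact hρ n
  | app M N ihM ihN =>
    rintro ρ ρ' hρ _ ⟨y, hy, rfl⟩
    obtain ⟨a, ha, haN, z, hj, hz⟩ := hy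
    exact ⟨f '' a, ha.image f, (Set.image_mono haN).trans (ihN ρ ρ' hρ), f z,
      hf a y z hj, ihM ρ ρ' hρ ⟨z, hz, rfl⟩⟩
  | lam M ih =>
    rintro ρ ρ' hρ _ ⟨w, hw, rfl⟩
    obtain ⟨a, u, ha, hj, hu⟩ := hw
    refine ⟨f '' a, f u, ha.image f, hf a u w hj, ?_⟩
    refine ih (envCons a ρ) (envCons (f '' a) ρ') ?_ ⟨u, hu, rfl⟩
    intro n; cases n with
    | zero => exact subset_rfl
    | succ n => exact hρ n

theorem interp_subset_carrier (P : PrePair α) (hP : P.Valid) :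
    ∀ (M : Term) (ρ : ℕ → Set α), (∀ n, ρ n ⊆ P.carrier) →
      interp P M ρ ⊆ P.carrier := by
  intro M
  induction M with
  | var n => intro ρ hρ; exact hρ n
  | app M N ihM ihN =>
    rintro ρ hρ y ⟨a, ha, haN, z, hj, hz⟩
    exact (hP.2.1 a y z hj).2.2.1
  | lam M ih =>
    rintro ρ hρ y ⟨a, u, ha, hj, hu⟩
    exact (hP.2.1 a u y hj).2.2.2

/-- Finite support of membership in an interpretation. -/
theorem finite_support (G : PrePair α) :
    ∀ (M : Term) (ρ : ℕ → Set α) (x : α), x ∈ interp G M ρ →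
      ∃ S : Set (Set α × α), S.Finite ∧ (∀ p ∈ S, ∃ y, G.j p = some y) ∧
        ∀ Q : PrePair α, (∀ p ∈ S, Q.j p = G.j p) → x ∈ interp Q M ρ := by
  intro M
  induction M with
  | var n =>
    intro ρ x hx
    exact ⟨∅, Set.finite_empty, by simp, fun Q _ => hx⟩
  | app M N ihM ihN =>
    rintro ρ x ⟨a, ha, haN, z, hj, hz⟩
    obtain ⟨SM, hSMf, hSMd, hSMq⟩ := ihM ρ z hz
    have h1 : ∀ w : a, ∃ S : Set (Set α × α), S.Finite ∧ (∀ p ∈ S, ∃ y, G.j p = some y) ∧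
        ∀ Q : PrePair α, (∀ p ∈ S, Q.j p = G.j p) → (w : α) ∈ interp Q N ρ :=
      fun w => ihN ρ w (haN w.2)
    choose F hF1 hF2 hF3 using h1
    haveI : Finite a := ha.to_subtype
    refine ⟨insert (a, x) (SM ∪ ⋃ w : a, F w), ?_, ?_, ?_⟩
    · exact (Set.finite_iUnion fun w => hF1 w).union hSMf |>.insert _
      |>.subset (by intro p hp; rcases hp with h | h; · exact Set.mem_insert_iff.2 (Or.inl h)
                    · exact Set.mem_insert_iff.2 (Or.inr (by rcases h with h | h; exacts [Or.inr h, Or.inl h])))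
    · rintro p hp
      rcases hp with rfl | hp
      · exact ⟨z, hj⟩
      rcases hp with hp | hp
      · exact hSMd p hp
      · obtain ⟨w, hw⟩ := Set.mem_iUnion.1 hp
        exact hF2 w p hw
    · intro Q hQ
      refine ⟨a, ha, ?_, z, ?_, ?_⟩
      · intro w hw
        exact hF3 ⟨w, hw⟩ Q fun p hp =>
          hQ p (Set.mem_insert_iff.2 (Or.inr (Or.inr (Set.mem_iUnion.2 ⟨⟨w, hw⟩, hp⟩))))
      · rw [hQ (a, x) (Set.mem_insert _ _)]; exact hj
      · exact hSMq Q fun p hp => hQ p (Set.mem_insert_iff.2 (Or.inr (Or.inl hp)))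
  | lam M ih =>
    rintro ρ x ⟨a, u, ha, hj, hu⟩
    obtain ⟨S, hSf, hSd, hSq⟩ := ih (envCons a ρ) u hu
    refine ⟨insert (a, u) S, hSf.insert _, ?_, ?_⟩
    · rintro p hp
      rcases hp with rfl | hp
      · exact ⟨x, hj⟩
      · exact hSd p hp
    · intro Q hQ
      refine ⟨a, u, ha, ?_, ?_⟩
      · rw [hQ (a, u) (Set.mem_insert _ _)]; exact hj
      · exact hSq Q fun p hp => hQ p (Set.mem_insert_iff.2 (Or.inr hp))

theorem FC.base_injective : Function.Injective (FC.base : α → FC α) :=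
  fun a b h => by cases h; rfl

/-- The canonical projection of the free completion of `B ⊑ G` back to `G`. -/
noncomputable def FC.proj (G : PrePair α) (d : α) : FC α → α
  | FC.base a => a
  | FC.node l w =>
      if h : ∃ z, G.j ((↑((l.attach.map fun t => FC.proj G d t.1).toFinset) : Set α),
          FC.proj G d w) = some z
      then h.choose else d
  termination_by t => sizeOf t
  decreasing_by
    all_goals simp only [FC.node.sizeOf_spec]
    all_goals first
      | (have := List.sizeOf_lt_of_mem t.2; omega)
      | omega

theorem FC.proj_base (G : PrePair α) (d a : α) : FC.proj G d (FC.base a) = a := by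
  rw [FC.proj]

theorem FC.proj_node_set (G : PrePair α) (d : α) (l : List (FC α)) :
    (↑((l.attach.map fun t => FC.proj G d t.1).toFinset) : Set α)
      = FC.proj G d '' {t | t ∈ l} := by
  ext z
  simp [Set.mem_image]

theorem FC.mem_listOf {s : Set (FC α)} (hs : s.Finite) {t : FC α} :
    t ∈ FC.listOf s ↔ t ∈ s := by
  rw [FC.listOf, dif_pos hs]
  simp [Finset.mem_toList, Set.Finite.mem_toFinset]

end Aux

section Aux2

variable {α : Type u}

theorem FC.base_mem_compCarrier (B : PrePair α) {b : α} (hb : b ∈ B.carrier) :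
    FC.base b ∈ FC.compCarrier B :=
  Set.mem_iUnion.2 ⟨0, ⟨b, hb, rfl⟩⟩

/-- `base` is a morphism `B → B̄`. -/
theorem jbar_base (B : PrePair α) (hB : B.Valid) :
    ∀ (a : Set α) (w y : α), B.j (a, w) = some y →
      (completion B).j (FC.base '' a, FC.base w) = some (FC.base y) := by
  intro a w y h
  obtain ⟨haf, haC, hwC, _⟩ := hB.2.1 a w y h
  have hcond : (FC.base '' a).Finite ∧ (FC.base '' a) ⊆ FC.compCarrier B ∧
      FC.base w ∈ FC.compCarrier B := by
    refine ⟨haf.image _, ?_, FC.base_mem_compCarrier B hwC⟩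
    rintro _ ⟨b, hb, rfl⟩
    exact FC.base_mem_compCarrier B (haC hb)
  have hex : ∃ y', FC.OldVal B (FC.base '' a) (FC.base w) y' :=
    ⟨FC.base y, a, w, y, rfl, rfl, h, rfl⟩
  show FC.jbar B _ = _
  rw [FC.jbar, if_pos hcond, dif_pos hex]
  congr 1
  obtain ⟨a₀, x₀, y₀, hA, hX, hJ, hY⟩ := hex.choose_spec
  obtain rfl : a = a₀ := Set.image_injective.2 FC.base_injective hA
  obtain rfl : w = x₀ := FC.base_injective hX
  rw [h] at hJ
  rw [hY, Option.some.inj hJ]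

theorem FC.proj_mem_carrier (B G : PrePair α) (hGv : G.Valid) (hGt : G.Total)
    (hBG : PrePair.Subpair B G) (d : α) :
    ∀ t ∈ FC.compCarrier B, FC.proj G d t ∈ G.carrier := by
  have key : ∀ n, ∀ t ∈ FC.stage B n, FC.proj G d t ∈ G.carrier := by
    intro n
    induction n with
    | zero => rintro t ⟨b, hb, rfl⟩; rw [FC.proj_base]; exact hBG.1 hb
    | succ n ih =>
      rintro t (⟨b, hb, rfl⟩ | ⟨a, w, haf, haS, hwS, _, rfl⟩)
      · rw [FC.proj_base]; exact hBG.1 hb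
      · have hset : FC.proj G d '' {t | t ∈ FC.listOf a} = FC.proj G d '' a := by
          have : {t | t ∈ FC.listOf a} = a := Set.ext fun t => FC.mem_listOf haf
          rw [this]
        have hsub : FC.proj G d '' a ⊆ G.carrier := by
          rintro _ ⟨u, hu, rfl⟩; exact ih u (haS hu)
        obtain ⟨z, hz⟩ := hGt _ _ (haf.image _) hsub (ih w hwS)
        have hex : ∃ z, G.j (FC.proj G d '' a, FC.proj G d w) = some z := ⟨z, hz⟩
        rw [FC.proj, FC.proj_node_set, hset, dif_pos hex]
        exact (hGv.2.1 _ _ _ hex.choose_spec).2.2.2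
  intro t ht
  obtain ⟨n, hn⟩ := Set.mem_iUnion.1 ht
  exact key n t hn

/-- `proj` is a morphism `B̄ → G`. -/
theorem FC.proj_morphism (B G : PrePair α) (hGv : G.Valid) (hGt : G.Total)
    (hBG : PrePair.Subpair B G) (d : α) :
    ∀ (a : Set (FC α)) (w y : FC α), (completion B).j (a, w) = some y →
      G.j (FC.proj G d '' a, FC.proj G d w) = some (FC.proj G d y) := by
  intro a w y h
  change FC.jbar B (a, w) = some y at h
  rw [FC.jbar] at h
  by_cases hcond : a.Finite ∧ a ⊆ FC.compCarrier B ∧ w ∈ FC.compCarrier B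
  swap
  · rw [if_neg hcond] at h; exact absurd h (by simp)
  rw [if_pos hcond] at h
  by_cases hold : ∃ y', FC.OldVal B a w y'
  · rw [dif_pos hold] at h
    obtain rfl : hold.choose = y := Option.some.inj h
    obtain ⟨a₀, x₀, y₀, hA, hX, hJ, hY⟩ := hold.choose_spec
    subst hA hX
    have h1 : FC.proj G d '' (FC.base '' a₀) = a₀ := by
      rw [Set.image_image]
      simp [FC.proj_base]
    rw [hY, h1, FC.proj_base, FC.proj_base]
    exact hBG.2 (a₀, x₀) y₀ hJ
  · rw [dif_neg hold] at h
    obtain rfl : FC.node (FC.listOf a) w = y := Option.some.inj h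
    have hset : FC.proj G d '' {t | t ∈ FC.listOf a} = FC.proj G d '' a := by
      have : {t | t ∈ FC.listOf a} = a := Set.ext fun t => FC.mem_listOf hcond.1
      rw [this]
    have hsub : FC.proj G d '' a ⊆ G.carrier := by
      rintro _ ⟨u, hu, rfl⟩
      exact FC.proj_mem_carrier B G hGv hGt hBG d u (hcond.2.1 hu)
    have hex : ∃ z, G.j (FC.proj G d '' a, FC.proj G d w) = some z :=
      hGt _ _ (hcond.1.image _) hsub
        (FC.proj_mem_carrier B G hGv hGt hBG d w hcond.2.2)
    rw [FC.proj, FC.proj_node_set, hset, dif_pos hex]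
    exact hex.choose_spec

end Aux2

/-- If `α ∈ ⟦M⟧^G ∖ ⟦N⟧^G` in a graph model `G`, there is a
finite subpair `A ⊑ G` containing `α` such that for every partial pair `B` with
`A ⊑ B ⊑ G` one has `α ∈ ⟦M⟧^B ∖ ⟦N⟧^B` and
`α ∈ ⟦M⟧^{G_B̄} ∖ ⟦N⟧^{G_B̄}` in the graph model freely generated by `B`. -/
theorem exists_finite_separating_subpair {α : Type u} (G : PrePair α)
    (hG : PrePair.IsGraphModel G) (M N : Term)
    (hM : Term.Closed M) (hN : Term.Closed N)
    (x : α) (hx : x ∈ interpC G M) (hx' : x ∉ interpC G N) :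
    ∃ A : PrePair α, PrePair.Subpair A G ∧ A.carrier.Finite ∧ A.Valid ∧
      x ∈ A.carrier ∧
      ∀ B : PrePair α, B.Valid → PrePair.Subpair A B → PrePair.Subpair B G →
        (x ∈ interpC B M ∧ x ∉ interpC B N) ∧
        (FC.base x ∈ interpC (completion B) M ∧
          FC.base x ∉ interpC (completion B) N) := by
    classical
  obtain ⟨hGv, hGt, _⟩ := hG
  obtain ⟨S, hSfin, hSdom, hSQ⟩ := finite_support G M (fun _ => ∅) x hx
  have hxG : x ∈ G.carrier :=
    interp_subset_carrier G hGv M (fun _ => ∅) (fun n => Set.empty_subset _) hx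
  have hdomfacts : ∀ p ∈ S, p.1.Finite ∧ p.1 ⊆ G.carrier ∧ p.2 ∈ G.carrier ∧
      (G.j p).getD x ∈ G.carrier := by
    intro p hp
    obtain ⟨y, hy⟩ := hSdom p hp
    have hy' : G.j (p.1, p.2) = some y := by rwa [Prod.mk.eta]
    obtain ⟨h1, h2, h3, h4⟩ := hGv.2.1 p.1 p.2 y hy'
    refine ⟨h1, h2, h3, ?_⟩
    rw [hy]
    exact h4
  refine ⟨⟨insert x (⋃ p ∈ S, insert p.2 (insert ((G.j p).getD x) p.1)),
      fun p => if p ∈ S then G.j p else none⟩, ?_, ?_, ?_, Set.mem_insert _ _, ?_⟩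
  · -- Subpair A G
    constructor
    · intro c hc
      rcases hc with rfl | hc
      · exact hxG
      obtain ⟨p, hp, hc⟩ := Set.mem_iUnion₂.1 hc
      obtain ⟨h1, h2, h3, h4⟩ := hdomfacts p hp
      rcases hc with rfl | hc
      · exact h3
      rcases hc with rfl | hc
      · exact h4
      · exact h2 hc
    · intro p y h
      simp only at h
      split at h
      · exact h
      · exact absurd h (by simp)
  · -- finite
    refine Set.Finite.insert _ (Set.Finite.biUnion hSfin fun p hp => ?_)
    exact (((hdomfacts p hp).1.insert _).insert _)
  · -- Valid
    refine ⟨⟨x, Set.mem_insert _ _⟩, ?_, ?_⟩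
    · intro a w y h
      simp only at h
      split at h
      case isFalse => exact absurd h (by simp)
      case isTrue hp =>
        obtain ⟨h1, _, _, _⟩ := hGv.2.1 a w y h
        have hmem : insert (a, w).2 (insert ((G.j (a, w)).getD x) (a, w).1) ⊆
            insert x (⋃ p ∈ S, insert p.2 (insert ((G.j p).getD x) p.1)) :=
          fun c hc => Set.mem_insert_iff.2 (Or.inr (Set.mem_iUnion₂.2 ⟨(a, w), hp, hc⟩))
        refine ⟨h1, ?_, ?_, ?_⟩
        · exact fun u hu => hmem (Set.mem_insert_iff.2 (Or.inr (Set.mem_insert_iff.2 (Or.inr hu))))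
        · exact hmem (Set.mem_insert _ _)
        · refine hmem (Set.mem_insert_iff.2 (Or.inr (Set.mem_insert_iff.2 (Or.inl ?_))))
          rw [h]
          rfl
    · intro p q y hp hq
      simp only at hp hq
      split at hp
      case isFalse => exact absurd hp (by simp)
      split at hq
      case isFalse => exact absurd hq (by simp)
      exact hGv.2.2 p q y hp hq
  · -- main quantified statement
    intro B hBv hAB hBG
    have hagree : ∀ p ∈ S, B.j p = G.j p := by
      intro p hp
      obtain ⟨y, hy⟩ := hSdom p hp
      have hA : (if p ∈ S then G.j p else none) = some y := by rw [if_pos hp, hy]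
      rw [hAB.2 p y hA, hy]
    have hxB : x ∈ interp B M (fun _ => ∅) := hSQ B hagree
    have hidf : ∀ (a : Set α) (w y : α), B.j (a, w) = some y →
        G.j (id '' a, id w) = some (id y) := by
      intro a w y h
      simpa [Set.image_id] using hBG.2 (a, w) y h
    have hmono : interp B N (fun _ => ∅) ⊆ interp G N (fun _ => ∅) := by
      intro t ht
      have := interp_mono_map B G id hidf N (fun _ => ∅) (fun _ => ∅)
        (fun n => by simp) ⟨t, ht, rfl⟩
      simpa using this
    refine ⟨⟨hxB, fun h => hx' (hmono h)⟩, ?_, ?_⟩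
    · exact interp_mono_map B (completion B) FC.base (jbar_base B hBv) M
        (fun _ => ∅) (fun _ => ∅) (fun n => by simp) ⟨x, hxB, rfl⟩
    · intro hmem
      obtain ⟨d, _⟩ := hGv.1
      have hproj := interp_mono_map (completion B) G (FC.proj G d)
        (FC.proj_morphism B G hGv hGt hBG d) N (fun _ => ∅) (fun _ => ∅)
        (fun n => by simp) ⟨_, hmem, rfl⟩
      rw [FC.proj_base] at hproj
      exact hx' hproj
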